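/- Lieb–Thirring inequality (trace form): for positive semidefinite real n×n matrices A, B and an integer r ≥ 1, Tr((B^{1/2} A B^{1/2})^r) ≤ Tr(B^{r/2} A^r B^{r/2}). -/

import Mathlib

open Matrix
open scoped Matrix.Norms.L2Operator MatrixOrder

set_option linter.unusedSectionVars false
set_option linter.deprecated false
namespace LiebThirring
variable {m : Type*} [Fintype m] [DecidableEq m]

lemma norm_one' [Nonempty m] : ‖(1 : Matrix m m ℝ)‖ = 1 := by
  rw [Matrix.cstar_norm_def, _root_.map_one]
  exact ContinuousLinearMap.norm_id

lemma norm_unitary [Nonempty m] {U : Matrix m m ℝ} (hU : U ∈ Matrix.unitaryGroup m ℝ) :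
    ‖U‖ = 1 := by
  have h1 : Uᴴ * U = 1 := by
    have := Matrix.mem_unitaryGroup_iff'.mp hU
    rwa [Matrix.star_eq_conjTranspose] at this
  have h : ‖U‖ * ‖U‖ = 1 := by
    rw [← Matrix.l2_opNorm_conjTranspose_mul_self U, h1, norm_one']
  have h0 : (0:ℝ) ≤ ‖U‖ := norm_nonneg U
  nlinarith

lemma norm_unitary_conj [Nonempty m] {U : Matrix m m ℝ} (hU : U ∈ Matrix.unitaryGroup m ℝ)
    (X : Matrix m m ℝ) : ‖U * X * Uᴴ‖ = ‖X‖ := by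
  have hUn := norm_unitary hU
  have hUHn : ‖Uᴴ‖ = 1 := by rw [Matrix.l2_opNorm_conjTranspose]; exact hUn
  have h1 : Uᴴ * U = 1 := by
    have := Matrix.mem_unitaryGroup_iff'.mp hU
    rwa [Matrix.star_eq_conjTranspose] at this
  apply le_antisymm
  · calc ‖U * X * Uᴴ‖ ≤ ‖U * X‖ * ‖Uᴴ‖ := Matrix.l2_opNorm_mul _ _
    _ ≤ (‖U‖ * ‖X‖) * ‖Uᴴ‖ :=
        mul_le_mul_of_nonneg_right (Matrix.l2_opNorm_mul U X) (norm_nonneg _)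
    _ = ‖X‖ := by rw [hUn, hUHn]; ring
  · have hX : X = Uᴴ * (U * X * Uᴴ) * U := by
      have : Uᴴ * (U * X * Uᴴ) * U = (Uᴴ * U) * X * (Uᴴ * U) := by
        simp only [mul_assoc]
      rw [this, h1]; simp
    calc ‖X‖ = ‖Uᴴ * (U * X * Uᴴ) * U‖ := by rw [← hX]
    _ ≤ ‖Uᴴ * (U * X * Uᴴ)‖ * ‖U‖ := Matrix.l2_opNorm_mul _ _
    _ ≤ (‖Uᴴ‖ * ‖U * X * Uᴴ‖) * ‖U‖ :=
        mul_le_mul_of_nonneg_right (Matrix.l2_opNorm_mul _ _) (norm_nonneg _)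
    _ = ‖U * X * Uᴴ‖ := by rw [hUn, hUHn]; ring

lemma euclidean_norm_eq (y : EuclideanSpace ℝ m) : ‖y‖ = Real.sqrt (∑ i, (y i)^2) := by
  rw [EuclideanSpace.norm_eq]
  congr 1
  refine Finset.sum_congr rfl fun i _ => ?_
  rw [Real.norm_eq_abs, sq_abs]

lemma coord_le_norm (w : EuclideanSpace ℝ m) (i : m) : |w i| ≤ ‖w‖ := by
  rw [euclidean_norm_eq, ← Real.sqrt_sq_eq_abs]
  apply Real.sqrt_le_sqrt
  exact Finset.single_le_sum (fun j _ => sq_nonneg (w j)) (Finset.mem_univ i)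

lemma norm_diagonal [Nonempty m] (d : m → ℝ) :
    ‖Matrix.diagonal d‖ = Finset.univ.sup' Finset.univ_nonempty (fun i => |d i|) := by
  have hM0 : (0:ℝ) ≤ Finset.univ.sup' Finset.univ_nonempty (fun i => |d i|) := by
    obtain ⟨i⟩ := ‹Nonempty m›
    exact le_trans (abs_nonneg (d i)) (Finset.le_sup' (fun i => |d i|) (Finset.mem_univ i))
  apply le_antisymm
  · rw [Matrix.l2_opNorm_def]
    apply ContinuousLinearMap.opNorm_le_bound _ hM0
    intro x
    have hx : ∀ i, ((Matrix.toEuclideanLin.trans LinearMap.toContinuousLinearMap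
        (Matrix.diagonal d)) x) i = d i * x i := by
      intro i
      simp [Matrix.toEuclideanLin_apply, Matrix.mulVec_diagonal]
    rw [euclidean_norm_eq, euclidean_norm_eq]
    rw [show (Finset.univ.sup' Finset.univ_nonempty (fun i => |d i|)) *
        Real.sqrt (∑ i, (x i)^2) =
        Real.sqrt ((Finset.univ.sup' Finset.univ_nonempty (fun i => |d i|))^2 *
          (∑ i, (x i)^2)) by
      rw [Real.sqrt_mul (sq_nonneg _), Real.sqrt_sq hM0]]
    apply Real.sqrt_le_sqrt
    rw [Finset.mul_sum]
    apply Finset.sum_le_sum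
    intro i _
    rw [hx i, mul_pow]
    apply mul_le_mul_of_nonneg_right _ (sq_nonneg (x i))
    rw [← sq_abs (d i)]
    apply pow_le_pow_left₀ (abs_nonneg _)
    exact Finset.le_sup' (fun i => |d i|) (Finset.mem_univ i)
  · apply Finset.sup'_le
    intro i _
    have h := Matrix.l2_opNorm_mulVec (Matrix.diagonal d) (EuclideanSpace.single i 1)
    rw [EuclideanSpace.norm_single, norm_one, mul_one] at h
    refine le_trans ?_ h
    have heq : ((EuclideanSpace.equiv m ℝ).symm
        (Matrix.diagonal d *ᵥ (EuclideanSpace.single i 1)) : EuclideanSpace ℝ m) i = d i := by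
      simp [Matrix.mulVec_diagonal, EuclideanSpace.single_apply, EuclideanSpace.equiv]
    calc |d i| = |((EuclideanSpace.equiv m ℝ).symm
        (Matrix.diagonal d *ᵥ (EuclideanSpace.single i 1)) : EuclideanSpace ℝ m) i| := by
          rw [heq]
    _ ≤ _ := coord_le_norm _ i

lemma star_coe_unitary {U : Matrix m m ℝ} (hU : U ∈ Matrix.unitaryGroup m ℝ) :
    Uᴴ * U = 1 := by
  have := Matrix.mem_unitaryGroup_iff'.mp hU
  rwa [Matrix.star_eq_conjTranspose] at this

lemma coe_unitary_star {U : Matrix m m ℝ} (hU : U ∈ Matrix.unitaryGroup m ℝ) :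
    U * Uᴴ = 1 := by
  have := Matrix.mem_unitaryGroup_iff.mp hU
  rwa [Matrix.star_eq_conjTranspose] at this

lemma conj_pow {U D : Matrix m m ℝ} (hU : U ∈ Matrix.unitaryGroup m ℝ) (N : ℕ) :
    (U * D * Uᴴ) ^ N = U * D ^ N * Uᴴ := by
  induction N with
  | zero => rw [pow_zero, pow_zero, mul_one, coe_unitary_star hU]
  | succ N ih =>
      rw [pow_succ, ih, pow_succ]
      have h2 : U * D ^ N * Uᴴ * (U * D * Uᴴ) = U * D ^ N * (Uᴴ * U) * D * Uᴴ := by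
        simp only [mul_assoc]
      rw [h2, star_coe_unitary hU, mul_one]
      simp only [mul_assoc]

lemma trace_conj_diag_pow {U : Matrix m m ℝ} (hU : U ∈ Matrix.unitaryGroup m ℝ)
    (d : m → ℝ) (N : ℕ) :
    ((U * Matrix.diagonal d * Uᴴ) ^ N).trace = ∑ i, d i ^ N := by
  rw [conj_pow hU, Matrix.trace_mul_cycle, star_coe_unitary hU, one_mul,
    Matrix.diagonal_pow, Matrix.trace_diagonal]
  simp [Pi.pow_apply]

lemma herm_trace_pow {A : Matrix m m ℝ} (hA : A.IsHermitian) (N : ℕ) :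
    (A ^ N).trace = ∑ i, hA.eigenvalues i ^ N := by
  have hofr : (RCLike.ofReal ∘ hA.eigenvalues : m → ℝ) = hA.eigenvalues := by
    funext i; simp
  conv_lhs => rw [hA.spectral_theorem, Unitary.conjStarAlgAut_apply, Matrix.star_eq_conjTranspose, hofr]
  exact trace_conj_diag_pow (hA.eigenvectorUnitary).2 _ N

lemma herm_norm_eq [Nonempty m] {A : Matrix m m ℝ} (hA : A.IsHermitian) :
    ‖A‖ = Finset.univ.sup' Finset.univ_nonempty (fun i => |hA.eigenvalues i|) := by
  have hofr : (RCLike.ofReal ∘ hA.eigenvalues : m → ℝ) = hA.eigenvalues := by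
    funext i; simp
  conv_lhs => rw [hA.spectral_theorem, Unitary.conjStarAlgAut_apply, Matrix.star_eq_conjTranspose, hofr]
  rw [norm_unitary_conj (hA.eigenvectorUnitary).2, norm_diagonal]

lemma psd_norm_pow_le_trace [Nonempty m] {G : Matrix m m ℝ} (hG : G.PosSemidef) (N : ℕ) :
    ‖G‖ ^ N ≤ (G ^ N).trace := by
  rw [herm_norm_eq hG.isHermitian, herm_trace_pow hG.isHermitian]
  obtain ⟨i0, _, hi0⟩ := Finset.exists_mem_eq_sup' Finset.univ_nonempty
    (fun i => |hG.isHermitian.eigenvalues i|)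
  rw [hi0, abs_of_nonneg (hG.eigenvalues_nonneg i0)]
  exact Finset.single_le_sum
    (fun j _ => pow_nonneg (hG.eigenvalues_nonneg j) N) (Finset.mem_univ i0)

lemma entry_le_norm (X : Matrix m m ℝ) (i : m) : |X i i| ≤ ‖X‖ := by
  have h := Matrix.l2_opNorm_mulVec X (EuclideanSpace.single i 1)
  rw [EuclideanSpace.norm_single, norm_one, mul_one] at h
  refine le_trans ?_ h
  have heq : ((EuclideanSpace.equiv m ℝ).symm
      (X *ᵥ (EuclideanSpace.single i 1)) : EuclideanSpace ℝ m) i = X i i := by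
    simp [Matrix.mulVec, dotProduct, EuclideanSpace.single_apply, EuclideanSpace.equiv]
  calc |X i i| = |((EuclideanSpace.equiv m ℝ).symm
      (X *ᵥ (EuclideanSpace.single i 1)) : EuclideanSpace ℝ m) i| := by rw [heq]
  _ ≤ _ := coord_le_norm _ i

lemma trace_le_card_norm (X : Matrix m m ℝ) : X.trace ≤ (Fintype.card m) * ‖X‖ := by
  rw [Matrix.trace]
  calc ∑ i, X.diag i ≤ ∑ i, |X i i| := Finset.sum_le_sum fun i _ => le_abs_self _
  _ ≤ ∑ _i : m, ‖X‖ := Finset.sum_le_sum fun _i _ => entry_le_norm X _i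
  _ = (Fintype.card m) * ‖X‖ := by rw [Finset.sum_const, nsmul_eq_mul, Fintype.card]

/-! ### The key norm inequality -/

lemma pow_mul_pow (X : Matrix m m ℝ) (a b c : ℕ) (h : a + b = c) : X^a * X^b = X^c := by
  rw [← pow_add, h]

lemma mul_pow_shift (X Y : Matrix m m ℝ) (N : ℕ) : (X*Y)^(N+1) = X * ((Y*X)^N) * Y := by
  induction N with
  | zero => rw [pow_zero, pow_one, mul_one]
  | succ N ih =>
      rw [pow_succ, ih, pow_succ]
      simp only [mul_assoc]

lemma trace_pow_mul_comm (X Y : Matrix m m ℝ) (N : ℕ) :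
    ((X * Y) ^ N).trace = ((Y * X) ^ N).trace := by
  cases N with
  | zero => rfl
  | succ N =>
      rw [mul_pow_shift, pow_succ', Matrix.trace_mul_cycle]

lemma le_of_forall_pow_le_mul {a b c : ℝ} (ha : 0 ≤ a) (hb : 0 ≤ b)
    (h : ∀ N : ℕ, 1 ≤ N → a ^ N ≤ c * b ^ N) : a ≤ b := by
  by_contra hlt
  push_neg at hlt
  rcases eq_or_lt_of_le hb with hb0 | hb0
  · have h1 := h 1 le_rfl
    rw [pow_one, pow_one, ← hb0, mul_zero] at h1
    linarith
  · have hratio : 1 < a / b := (one_lt_div hb0).mpr hlt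
    obtain ⟨N, hN⟩ := pow_unbounded_of_one_lt c hratio
    have h2 := h (N+1) (Nat.le_add_left 1 N)
    have h3 : (a / b) ^ (N+1) ≤ c := by
      rw [div_pow, div_le_iff₀ (pow_pos hb0 _)]
      linarith
    have h4 : (a / b) ^ N ≤ (a / b) ^ (N + 1) :=
      pow_le_pow_right₀ (le_of_lt hratio) (Nat.le_succ N)
    linarith

section Chain
variable [Nonempty m] {P Q : Matrix m m ℝ}

noncomputable def v (P Q : Matrix m m ℝ) (j : ℕ) : ℝ := ‖P^j * Q^j‖

lemma v_nonneg (j : ℕ) : 0 ≤ v P Q j := norm_nonneg _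

lemma conjT_PQ (hP : P.PosSemidef) (hQ : Q.PosSemidef) (a : ℕ) :
    (P^a * Q^a)ᴴ = Q^a * P^a := by
  rw [Matrix.conjTranspose_mul, (hP.pow a).isHermitian.eq, (hQ.pow a).isHermitian.eq]

lemma sandwich_eq (hP : P.PosSemidef) (hQ : Q.PosSemidef) (a : ℕ) :
    Q^a * P^(2*a) * Q^a = (P^a * Q^a)ᴴ * (P^a * Q^a) := by
  rw [conjT_PQ hP hQ]
  have h : (Q ^ a * P ^ a) * (P ^ a * Q ^ a) = Q ^ a * (P ^ a * P ^ a) * Q ^ a := by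
    simp only [mul_assoc]
  rw [h, pow_mul_pow P a a (2*a) (by ring)]

lemma v_sq (hP : P.PosSemidef) (hQ : Q.PosSemidef) (a : ℕ) :
    ‖Q^a * P^(2*a) * Q^a‖ = v P Q a ^ 2 := by
  rw [sandwich_eq hP hQ, Matrix.l2_opNorm_conjTranspose_mul_self, sq]
  rfl

lemma v_rev (hP : P.PosSemidef) (hQ : Q.PosSemidef) (a : ℕ) :
    ‖Q^a * P^a‖ = v P Q a := by
  rw [← conjT_PQ hP hQ, Matrix.l2_opNorm_conjTranspose]
  rfl

lemma chain_step (hP : P.PosSemidef) (hQ : Q.PosSemidef) (j : ℕ) :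
    v P Q (j+1) ^ 2 ≤ v P Q j * v P Q (j+2) := by
  have hMpsd : (Q^(j+1) * P^(2*(j+1)) * Q^(j+1)).PosSemidef := by
    rw [sandwich_eq hP hQ]
    exact Matrix.posSemidef_conjTranspose_mul_self _
  apply le_of_forall_pow_le_mul (sq_nonneg _)
    (mul_nonneg (v_nonneg j) (v_nonneg (j+2)))
  intro N hN
  set M := Q^(j+1) * P^(2*(j+1)) * Q^(j+1) with hMdef
  have step1 : (v P Q (j+1) ^ 2) ^ N ≤ (M ^ N).trace := by
    rw [← v_sq hP hQ (j+1)]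
    exact psd_norm_pow_le_trace hMpsd N
  have t1 : (M ^ N).trace = ((P^(2*(j+1)) * Q^(2*(j+1)))^N).trace := by
    have h : M = Q^(j+1) * (P^(2*(j+1)) * Q^(j+1)) := by
      rw [hMdef]; simp only [mul_assoc]
    rw [h, trace_pow_mul_comm, mul_assoc, pow_mul_pow Q (j+1) (j+1) (2*(j+1)) (by ring)]
  have e2 : (Q^(2*(j+1)) * P^j) * P^(j+2) = Q^(2*(j+1)) * P^(2*(j+1)) := by
    rw [mul_assoc, pow_mul_pow P j (j+2) (2*(j+1)) (by ring)]
  have e1 : P^(j+2) * (Q^(2*(j+1)) * P^j) = P^(j+2) * Q^(j+2) * (Q^j * P^j) := by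
    have h : P^(j+2) * Q^(j+2) * (Q^j * P^j) = P^(j+2) * (Q^(j+2) * Q^j) * P^j := by
      simp only [mul_assoc]
    rw [h, pow_mul_pow Q (j+2) j (2*(j+1)) (by ring)]
    simp only [mul_assoc]
  have t2 : ((P^(2*(j+1)) * Q^(2*(j+1)))^N).trace
      = ((P^(j+2) * Q^(j+2) * (Q^j * P^j))^N).trace := by
    calc ((P^(2*(j+1)) * Q^(2*(j+1)))^N).trace
        = ((Q^(2*(j+1)) * P^(2*(j+1)))^N).trace := trace_pow_mul_comm _ _ _
    _ = (((Q^(2*(j+1)) * P^j) * P^(j+2))^N).trace := by rw [e2]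
    _ = ((P^(j+2) * (Q^(2*(j+1)) * P^j))^N).trace := trace_pow_mul_comm _ _ _
    _ = _ := by rw [e1]
  have step2 : ((P^(j+2) * Q^(j+2) * (Q^j * P^j))^N).trace
      ≤ (Fintype.card m) * (v P Q j * v P Q (j+2)) ^ N := by
    calc ((P^(j+2) * Q^(j+2) * (Q^j * P^j))^N).trace
        ≤ (Fintype.card m) * ‖(P^(j+2) * Q^(j+2) * (Q^j * P^j))^N‖ :=
          trace_le_card_norm _
    _ ≤ (Fintype.card m) * (v P Q j * v P Q (j+2)) ^ N := by
        apply mul_le_mul_of_nonneg_left _ (Nat.cast_nonneg _)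
        calc ‖(P^(j+2) * Q^(j+2) * (Q^j * P^j))^N‖
            ≤ ‖P^(j+2) * Q^(j+2) * (Q^j * P^j)‖ ^ N := norm_pow_le' _ hN
        _ ≤ (v P Q j * v P Q (j+2)) ^ N := by
            apply pow_le_pow_left₀ (norm_nonneg _)
            calc ‖P^(j+2) * Q^(j+2) * (Q^j * P^j)‖
                ≤ ‖P^(j+2) * Q^(j+2)‖ * ‖Q^j * P^j‖ := Matrix.l2_opNorm_mul _ _
            _ = v P Q (j+2) * v P Q j := by rw [v_rev hP hQ]; rfl
            _ = v P Q j * v P Q (j+2) := mul_comm _ _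
  calc (v P Q (j+1) ^ 2) ^ N ≤ (M ^ N).trace := step1
  _ = ((P^(j+2) * Q^(j+2) * (Q^j * P^j))^N).trace := by rw [t1, t2]
  _ ≤ (Fintype.card m) * (v P Q j * v P Q (j+2)) ^ N := step2

lemma v_zero : v P Q 0 = 1 := by
  rw [v, pow_zero, pow_zero, mul_one, norm_one']

lemma chain_aux (hP : P.PosSemidef) (hQ : Q.PosSemidef) :
    ∀ j : ℕ, v P Q 1 * v P Q j ≤ v P Q (j+1) := by
  intro j
  induction j with
  | zero => rw [v_zero, mul_one]
  | succ j ih =>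
      have h := chain_step hP hQ j
      rcases eq_or_lt_of_le (v_nonneg (P := P) (Q := Q) j) with h0 | h0
      · have hz : v P Q (j+1) = 0 := by
          have h2 : v P Q (j+1)^2 ≤ 0 := by
            rw [← h0, zero_mul] at h
            exact h
          nlinarith [v_nonneg (P := P) (Q := Q) (j+1)]
        rw [hz, mul_zero]
        exact v_nonneg _
      · nlinarith [v_nonneg (P := P) (Q := Q) 1, v_nonneg (P := P) (Q := Q) (j+1),
          mul_le_mul_of_nonneg_right ih (v_nonneg (P := P) (Q := Q) (j+1))]

lemma v_one_pow_le (hP : P.PosSemidef) (hQ : Q.PosSemidef) (M : ℕ) :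
    v P Q 1 ^ M ≤ v P Q M := by
  induction M with
  | zero => rw [pow_zero, v_zero]
  | succ M ih =>
      calc v P Q 1 ^ (M+1) = v P Q 1 * v P Q 1 ^ M := by ring
      _ ≤ v P Q 1 * v P Q M := mul_le_mul_of_nonneg_left ih (v_nonneg _)
      _ ≤ v P Q (M+1) := chain_aux hP hQ M

end Chain

/-- The key norm inequality: for PSD `A`, `T`: `‖T A T‖ ^ M ≤ ‖T^M A^M T^M‖`. -/
theorem norm_conj_pow_le [Nonempty m] {A T : Matrix m m ℝ}
    (hA : A.PosSemidef) (hT : T.PosSemidef) (M : ℕ) :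
    ‖T * A * T‖ ^ M ≤ ‖T^M * A^M * T^M‖ := by
  set P := CFC.sqrt A with hPdef
  have hP : P.PosSemidef := (CFC.sqrt_nonneg A).posSemidef
  have hPP : P ^ 2 = A := CFC.sq_sqrt A hA.nonneg
  have key : ∀ a : ℕ, T^a * A^a * T^a = (P^a * T^a)ᴴ * (P^a * T^a) := by
    intro a
    rw [conjT_PQ hP hT]
    have h : (T ^ a * P ^ a) * (P ^ a * T ^ a) = T^a * (P^a * P^a) * T^a := by
      simp only [mul_assoc]
    rw [h, pow_mul_pow P a a (2*a) (by ring), ← hPP, ← pow_mul]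
  have hv : ∀ a : ℕ, ‖T^a * A^a * T^a‖ = v P T a ^ 2 := by
    intro a
    rw [key a, Matrix.l2_opNorm_conjTranspose_mul_self, sq]
    rfl
  have h2 := v_one_pow_le hP hT M
  calc ‖T * A * T‖ ^ M = (v P T 1 ^ 2) ^ M := by
        have h1 := hv 1
        simp only [pow_one] at h1
        rw [h1]
  _ = (v P T 1 ^ M) ^ 2 := by ring
  _ ≤ (v P T M) ^ 2 := pow_le_pow_left₀ (pow_nonneg (v_nonneg _) _) h2 2
  _ = ‖T^M * A^M * T^M‖ := (hv M).symm


/-! ### Compound matrices and Cauchy–Binet -/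

section Compound
open Equiv Equiv.Perm Finset

variable {n : ℕ}

abbrev SubIdx (n k : ℕ) := {s : Finset (Fin n) // s.card = k}

def cpd (k : ℕ) (M : Matrix (Fin n) (Fin n) ℝ) :
    Matrix (SubIdx n k) (SubIdx n k) ℝ :=
  fun s t => (M.submatrix (s.1.orderEmbOfFin s.2) (t.1.orderEmbOfFin t.2)).det

lemma subIdx_nonempty {k : ℕ} (hk : k ≤ n) : Nonempty (SubIdx n k) := by
  obtain ⟨t, _, ht⟩ := Finset.exists_subset_card_eq (s := (Finset.univ : Finset (Fin n))) (n := k)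
    (by simpa using hk)
  exact ⟨⟨t, ht⟩⟩

lemma exists_row_not_mem {k : ℕ} {s t : SubIdx n k} (hst : s ≠ t) :
    ∃ i : Fin k, (s.1.orderEmbOfFin s.2 i) ∉ t.1 := by
  by_contra h
  push_neg at h
  have hsub : s.1 ⊆ t.1 := by
    intro a ha
    have hrange := Finset.range_orderEmbOfFin s.1 s.2
    have : a ∈ Set.range (s.1.orderEmbOfFin s.2) := by rw [hrange]; exact ha
    obtain ⟨i, hi⟩ := this
    exact hi ▸ h i
  exact hst (Subtype.ext (Finset.eq_of_subset_of_card_le hsub (by rw [s.2, t.2])))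

lemma cpd_one (k : ℕ) : cpd k (1 : Matrix (Fin n) (Fin n) ℝ) = 1 := by
  ext s t
  by_cases hst : s = t
  · subst hst
    have h1 : (1 : Matrix (Fin n) (Fin n) ℝ).submatrix
        (s.1.orderEmbOfFin s.2) (s.1.orderEmbOfFin s.2) = 1 := by
      ext i j
      simp only [Matrix.submatrix_apply, Matrix.one_apply,
        (s.1.orderEmbOfFin s.2).injective.eq_iff]
    rw [cpd, h1, Matrix.det_one, Matrix.one_apply_eq]
  · obtain ⟨i, hi⟩ := exists_row_not_mem hst
    rw [cpd, Matrix.det_eq_zero_of_row_eq_zero i, Matrix.one_apply_ne hst]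
    intro j
    simp only [Matrix.submatrix_apply]
    exact Matrix.one_apply_ne (fun hc => hi (hc ▸ Finset.orderEmbOfFin_mem t.1 t.2 j))

lemma prod_orderEmbOfFin {k : ℕ} (s : SubIdx n k) (f : Fin n → ℝ) :
    ∏ i : Fin k, f (s.1.orderEmbOfFin s.2 i) = ∏ a ∈ s.1, f a := by
  have himg : Finset.image (s.1.orderEmbOfFin s.2) Finset.univ = s.1 := by
    ext a
    simp only [Finset.mem_image, Finset.mem_univ, true_and]
    constructor
    · rintro ⟨i, rfl⟩; exact Finset.orderEmbOfFin_mem s.1 s.2 i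
    · intro ha
      have hrange := Finset.range_orderEmbOfFin s.1 s.2
      have : a ∈ Set.range (s.1.orderEmbOfFin s.2) := by rw [hrange]; exact ha
      obtain ⟨i, hi⟩ := this
      exact ⟨i, hi⟩
  have h2 := Finset.prod_image
    (f := f) (g := (s.1.orderEmbOfFin s.2)) (s := Finset.univ)
    (fun i _ j _ h => (s.1.orderEmbOfFin s.2).injective h)
  rw [himg] at h2
  exact h2.symm

lemma cpd_diagonal {k : ℕ} (d : Fin n → ℝ) :
    cpd k (Matrix.diagonal d) = Matrix.diagonal (fun s : SubIdx n k => ∏ a ∈ s.1, d a) := by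
  ext s t
  by_cases hst : s = t
  · subst hst
    have h1 : (Matrix.diagonal d).submatrix
        (s.1.orderEmbOfFin s.2) (s.1.orderEmbOfFin s.2)
        = Matrix.diagonal (fun i : Fin k => d (s.1.orderEmbOfFin s.2 i)) := by
      ext i j
      by_cases hij : i = j
      · subst hij; simp [Matrix.submatrix_apply, Matrix.diagonal_apply_eq]
      · have : s.1.orderEmbOfFin s.2 i ≠ s.1.orderEmbOfFin s.2 j :=
          fun hc => hij ((s.1.orderEmbOfFin s.2).injective hc)
        simp [Matrix.submatrix_apply, Matrix.diagonal_apply_ne _ this,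
          Matrix.diagonal_apply_ne _ hij]
    rw [cpd, h1, Matrix.det_diagonal, Matrix.diagonal_apply_eq, prod_orderEmbOfFin]
  · obtain ⟨i, hi⟩ := exists_row_not_mem hst
    rw [cpd, Matrix.det_eq_zero_of_row_eq_zero i, Matrix.diagonal_apply_ne _ hst]
    intro j
    simp only [Matrix.submatrix_apply]
    exact Matrix.diagonal_apply_ne d
      (fun hc => hi (hc ▸ Finset.orderEmbOfFin_mem t.1 t.2 j))

lemma cpd_transpose {k : ℕ} (M : Matrix (Fin n) (Fin n) ℝ) :
    cpd k Mᵀ = (cpd k M)ᵀ := by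
  ext s t
  rw [Matrix.transpose_apply, cpd, cpd]
  have h : Mᵀ.submatrix (s.1.orderEmbOfFin s.2) (t.1.orderEmbOfFin t.2)
      = (M.submatrix (t.1.orderEmbOfFin t.2) (s.1.orderEmbOfFin s.2))ᵀ :=
    (Matrix.transpose_submatrix _ _ _).symm
  rw [h, Matrix.det_transpose]

lemma real_conjTranspose_eq_transpose {I J : Type*} (M : Matrix I J ℝ) : Mᴴ = Mᵀ := by
  ext i j
  simp [Matrix.conjTranspose_apply]

lemma cpd_conjTranspose {k : ℕ} (M : Matrix (Fin n) (Fin n) ℝ) :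
    cpd k Mᴴ = (cpd k M)ᴴ := by
  rw [real_conjTranspose_eq_transpose, real_conjTranspose_eq_transpose, cpd_transpose]

theorem cauchyBinet {k : ℕ} (M : Matrix (Fin k) (Fin n) ℝ) (N : Matrix (Fin n) (Fin k) ℝ) :
    (M * N).det = ∑ u : SubIdx n k,
      (M.submatrix id (u.1.orderEmbOfFin u.2)).det *
      (N.submatrix (u.1.orderEmbOfFin u.2) id).det := by
  classical
  set F : (Fin k → Fin n) → ℝ := fun p => ∑ σ : Equiv.Perm (Fin k),
      ((Equiv.Perm.sign σ : ℤ) : ℝ) * ∏ x, M (σ x) (p x) * N (p x) x with hF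
  set e : SubIdx n k → (Fin k → Fin n) := fun u => (u.1.orderEmbOfFin u.2 : Fin k → Fin n)
    with he
  have stepA : (M * N).det = ∑ p : Fin k → Fin n, F p := by
    simp only [hF, Matrix.det_apply', Matrix.mul_apply, Finset.prod_univ_sum, Finset.mul_sum,
      Fintype.piFinset_univ]
    rw [Finset.sum_comm]
  have aux : ∀ p : Fin k → Fin n, ¬Function.Injective p → F p = 0 := by
    intro p H
    obtain ⟨i, j, hpij, hij⟩ : ∃ i j, p i = p j ∧ i ≠ j := by
      rw [Function.Injective] at H
      push_neg at H
      obtain ⟨i, j, h1, h2⟩ := H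
      exact ⟨i, j, h1, h2⟩
    exact Finset.sum_involution (fun σ _ => σ * Equiv.swap i j)
      (fun σ _ => by
        have hprod : (∏ x, M (σ x) (p x)) = ∏ x, M ((σ * Equiv.swap i j) x) (p x) :=
          Fintype.prod_equiv (Equiv.swap i j) _ _ (by simp [Equiv.apply_swap_eq_self hpij])
        simp [hprod, Equiv.Perm.sign_swap hij, Finset.prod_mul_distrib])
      (fun σ _ _ => (not_congr mul_swap_eq_iff).mpr hij) (fun _ _ => Finset.mem_univ _)
      (fun σ _ => mul_swap_involutive i j σ)
  have stepC : ∑ p : Fin k → Fin n, F p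
      = ∑ p ∈ Finset.univ.filter (fun p : Fin k → Fin n => Function.Injective p), F p := by
    refine (Finset.sum_subset (Finset.filter_subset _ _) fun p _ hp => aux p ?_).symm
    simpa using hp
  have himg : ∀ (u : SubIdx n k) (τ : Equiv.Perm (Fin k)),
      Finset.image (fun x => e u (τ x)) Finset.univ = u.1 := by
    intro u τ
    ext a
    simp only [Finset.mem_image, Finset.mem_univ, true_and]
    constructor
    · rintro ⟨x, rfl⟩
      exact Finset.orderEmbOfFin_mem u.1 u.2 (τ x)
    · intro ha
      have : a ∈ Set.range (u.1.orderEmbOfFin u.2) := by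
        rw [Finset.range_orderEmbOfFin]; exact ha
      obtain ⟨i, hi⟩ := this
      exact ⟨τ⁻¹ i, by simp [he, hi]⟩
  have stepD : ∑ p ∈ Finset.univ.filter (fun p : Fin k → Fin n => Function.Injective p), F p
      = ∑ uτ : SubIdx n k × Equiv.Perm (Fin k), F (fun x => e uτ.1 (uτ.2 x)) := by
    refine (Finset.sum_bij (fun (uτ : SubIdx n k × Equiv.Perm (Fin k)) _ =>
      (fun x => e uτ.1 (uτ.2 x))) ?_ ?_ ?_ ?_).symm
    · intro uτ _
      simp only [Finset.mem_filter, Finset.mem_univ, true_and]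
      exact fun x y hxy => uτ.2.injective ((uτ.1.1.orderEmbOfFin uτ.1.2).injective hxy)
    · intro a ha b hb hab
      have hu : a.1 = b.1 := by
        apply Subtype.ext
        rw [← himg a.1 a.2, ← himg b.1 b.2]
        exact Finset.image_congr (fun x _ => congrFun hab x)
      obtain ⟨ua, τa⟩ := a
      obtain ⟨ub, τb⟩ := b
      simp only at hu
      subst hu
      have hτ : τa = τb :=
        Equiv.ext fun x => (ua.1.orderEmbOfFin ua.2).injective (congrFun hab x)
      rw [hτ]
    · intro p hp
      have hinj : Function.Injective p := by simpa using hp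
      have hcard : (Finset.image p Finset.univ).card = k := by
        rw [Finset.card_image_of_injective _ hinj, Finset.card_univ, Fintype.card_fin]
      set u : SubIdx n k := ⟨Finset.image p Finset.univ, hcard⟩ with hu
      have hmem : ∀ x, p x ∈ u.1 := fun x =>
        Finset.mem_image.mpr ⟨x, Finset.mem_univ x, rfl⟩
      set g : Fin k → Fin k := fun x => (u.1.orderIsoOfFin u.2).symm ⟨p x, hmem x⟩ with hg
      have hge : ∀ x, e u (g x) = p x := by
        intro x
        have h1 : (u.1.orderIsoOfFin u.2) (g x) = ⟨p x, hmem x⟩ := by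
          rw [hg]; exact (u.1.orderIsoOfFin u.2).apply_symm_apply _
        have h2 := congrArg Subtype.val h1
        rwa [Finset.coe_orderIsoOfFin_apply] at h2
      have hginj : Function.Injective g := by
        intro x y hxy
        apply hinj
        rw [← hge x, ← hge y, hxy]
      refine ⟨⟨u, Equiv.ofBijective g (Finite.injective_iff_bijective.mp hginj)⟩,
        Finset.mem_univ _, ?_⟩
      funext x
      exact hge x
    · intro uτ _
      rfl
  have stepE : ∀ u : SubIdx n k,
      (∑ τ : Equiv.Perm (Fin k), F (fun x => e u (τ x)))
      = (M.submatrix id (e u)).det * (N.submatrix (e u) id).det := by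
    intro u
    have inner_eq : ∀ τ σ : Equiv.Perm (Fin k),
        (∏ x, M (σ x) (e u (τ x)) * N (e u (τ x)) x)
        = (∏ x, M (σ (τ⁻¹ x)) (e u x)) * ∏ x, N (e u x) (τ⁻¹ x) := by
      intro τ σ
      calc ∏ x, M (σ x) (e u (τ x)) * N (e u (τ x)) x
          = ∏ x, M (σ (τ⁻¹ x)) (e u x) * N (e u x) (τ⁻¹ x) :=
            Fintype.prod_equiv τ _ _ (fun x => by simp only [Equiv.Perm.coe_inv, Equiv.symm_apply_apply])
        _ = _ := Finset.prod_mul_distrib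
    have hdetM : (∑ ρ : Equiv.Perm (Fin k), ((Equiv.Perm.sign ρ : ℤ) : ℝ)
        * ∏ x, M (ρ x) (e u x)) = (M.submatrix id (e u)).det := by
      rw [Matrix.det_apply']
      refine Finset.sum_congr rfl fun ρ _ => ?_
      simp [Matrix.submatrix_apply]
    have hdetN : (∑ τ : Equiv.Perm (Fin k), ((Equiv.Perm.sign τ : ℤ) : ℝ)
        * ∏ x, N (e u x) (τ⁻¹ x)) = (N.submatrix (e u) id).det := by
      rw [show (N.submatrix (e u) id).det = ((N.submatrix (e u) id)ᵀ).det from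
        (Matrix.det_transpose _).symm, Matrix.det_apply']
      refine Fintype.sum_equiv (Equiv.inv (Equiv.Perm (Fin k))) _ _ fun τ => ?_
      simp [Equiv.inv_apply, Matrix.transpose_apply, Matrix.submatrix_apply,
        Equiv.Perm.sign_inv]
    calc (∑ τ : Equiv.Perm (Fin k), F (fun x => e u (τ x)))
        = ∑ τ : Equiv.Perm (Fin k), ∑ σ : Equiv.Perm (Fin k),
            ((Equiv.Perm.sign σ : ℤ) : ℝ) *
            ((∏ x, M (σ (τ⁻¹ x)) (e u x)) * ∏ x, N (e u x) (τ⁻¹ x)) := by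
          refine Finset.sum_congr rfl fun τ _ => Finset.sum_congr rfl fun σ _ => ?_
          rw [inner_eq]
      _ = ∑ τ : Equiv.Perm (Fin k),
            (∑ ρ : Equiv.Perm (Fin k), ((Equiv.Perm.sign ρ : ℤ) : ℝ)
              * ∏ x, M (ρ x) (e u x))
            * (((Equiv.Perm.sign τ : ℤ) : ℝ) * ∏ x, N (e u x) (τ⁻¹ x)) := by
          refine Finset.sum_congr rfl fun τ _ => ?_
          rw [Finset.sum_mul]
          refine Fintype.sum_equiv (Equiv.mulRight τ).symm _ _ fun σ => ?_
          have hs : ((Equiv.Perm.sign (σ * τ⁻¹) : ℤ) : ℝ) * ((Equiv.Perm.sign τ : ℤ) : ℝ)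
              = ((Equiv.Perm.sign σ : ℤ) : ℝ) := by
            have h1 : σ * τ⁻¹ * τ = σ := by group
            calc ((Equiv.Perm.sign (σ * τ⁻¹) : ℤ) : ℝ) * ((Equiv.Perm.sign τ : ℤ) : ℝ)
                = ((Equiv.Perm.sign (σ * τ⁻¹ * τ) : ℤ) : ℝ) := by
                  rw [Equiv.Perm.sign_mul (σ * τ⁻¹) τ, Units.val_mul, Int.cast_mul]
              _ = _ := by rw [h1]
          simp only [Equiv.mulRight_symm, Equiv.coe_mulRight, Equiv.Perm.mul_apply]
          rw [← hs]
          ring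
      _ = (∑ ρ : Equiv.Perm (Fin k), ((Equiv.Perm.sign ρ : ℤ) : ℝ)
            * ∏ x, M (ρ x) (e u x))
          * ∑ τ : Equiv.Perm (Fin k), ((Equiv.Perm.sign τ : ℤ) : ℝ)
            * ∏ x, N (e u x) (τ⁻¹ x) := by
          rw [Finset.mul_sum]
      _ = _ := by rw [hdetM, hdetN]
  calc (M * N).det = ∑ p : Fin k → Fin n, F p := stepA
  _ = ∑ p ∈ Finset.univ.filter (fun p : Fin k → Fin n => Function.Injective p), F p := stepC
  _ = ∑ uτ : SubIdx n k × Equiv.Perm (Fin k), F (fun x => e uτ.1 (uτ.2 x)) := stepD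
  _ = ∑ u : SubIdx n k, ∑ τ : Equiv.Perm (Fin k), F (fun x => e u (τ x)) :=
      Fintype.sum_prod_type _
  _ = _ := Finset.sum_congr rfl fun u _ => stepE u

lemma cpd_mul {k : ℕ} (X Y : Matrix (Fin n) (Fin n) ℝ) :
    cpd k (X * Y) = cpd k X * cpd k Y := by
  ext s t
  have hsub : (X * Y).submatrix (s.1.orderEmbOfFin s.2) (t.1.orderEmbOfFin t.2)
      = (X.submatrix (s.1.orderEmbOfFin s.2) id) * (Y.submatrix id (t.1.orderEmbOfFin t.2)) := by
    ext i j
    simp [Matrix.mul_apply, Matrix.submatrix_apply]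
  rw [Matrix.mul_apply]
  rw [cpd, hsub, cauchyBinet]
  refine Finset.sum_congr rfl fun u _ => ?_
  rw [cpd, cpd]
  rw [Matrix.submatrix_submatrix, Matrix.submatrix_submatrix]
  simp only [Function.comp_id, Function.id_comp]

end Compound


/-! ### Compound spectral facts -/

section CompoundMore
variable {n : ℕ}

lemma cpd_pow (k : ℕ) (X : Matrix (Fin n) (Fin n) ℝ) (M : ℕ) :
    cpd k (X ^ M) = (cpd k X) ^ M := by
  induction M with
  | zero => rw [pow_zero, pow_zero, cpd_one]
  | succ M ih => rw [pow_succ, pow_succ, cpd_mul, ih]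

lemma cpd_posSemidef {A : Matrix (Fin n) (Fin n) ℝ} (hA : A.PosSemidef) (k : ℕ) :
    (cpd k A).PosSemidef := by
  have h : cpd k A = (cpd k (CFC.sqrt A))ᴴ * cpd k (CFC.sqrt A) := by
    rw [← cpd_conjTranspose, (CFC.sqrt_nonneg A).posSemidef.isHermitian.eq, ← cpd_mul,
      CFC.sqrt_mul_sqrt_self A hA.nonneg]
  rw [h]
  exact Matrix.posSemidef_conjTranspose_mul_self _

lemma cpd_unitary {U : Matrix (Fin n) (Fin n) ℝ} (hU : U ∈ Matrix.unitaryGroup (Fin n) ℝ)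
    (k : ℕ) : cpd k U ∈ Matrix.unitaryGroup (SubIdx n k) ℝ := by
  rw [Matrix.mem_unitaryGroup_iff, Matrix.star_eq_conjTranspose, ← cpd_conjTranspose,
    ← cpd_mul, coe_unitary_star hU, cpd_one]

lemma cpd_norm_eq {C : Matrix (Fin n) (Fin n) ℝ} (hC : C.PosSemidef) (k : ℕ)
    [Nonempty (SubIdx n k)] :
    ‖cpd k C‖ = Finset.univ.sup' Finset.univ_nonempty
      (fun s : SubIdx n k => ∏ a ∈ s.1, hC.isHermitian.eigenvalues a) := by
  have hofr : (RCLike.ofReal ∘ hC.isHermitian.eigenvalues : Fin n → ℝ)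
      = hC.isHermitian.eigenvalues := by funext i; simp
  have hspec := hC.isHermitian.spectral_theorem
  rw [Unitary.conjStarAlgAut_apply, Matrix.star_eq_conjTranspose, hofr] at hspec
  have hcpd : cpd k C = (cpd k (hC.isHermitian.eigenvectorUnitary : Matrix (Fin n) (Fin n) ℝ))
      * Matrix.diagonal (fun s : SubIdx n k => ∏ a ∈ s.1, hC.isHermitian.eigenvalues a)
      * (cpd k (hC.isHermitian.eigenvectorUnitary : Matrix (Fin n) (Fin n) ℝ))ᴴ := by
    conv_lhs => rw [hspec]
    rw [cpd_mul, cpd_mul, cpd_diagonal, cpd_conjTranspose]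
  rw [hcpd, norm_unitary_conj (cpd_unitary hC.isHermitian.eigenvectorUnitary.2 k),
    norm_diagonal]
  apply le_antisymm
  · apply Finset.sup'_le
    intro s _
    rw [abs_of_nonneg (Finset.prod_nonneg fun a _ => hC.eigenvalues_nonneg a)]
    exact Finset.le_sup' (fun t : SubIdx n k => ∏ a ∈ t.1, hC.isHermitian.eigenvalues a)
      (Finset.mem_univ s)
  · apply Finset.sup'_le
    intro s _
    exact le_trans (le_abs_self _)
      (Finset.le_sup' (fun t : SubIdx n k => |∏ a ∈ t.1, hC.isHermitian.eigenvalues a|)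
        (Finset.mem_univ s))

end CompoundMore

/-! ### Majorization: log-product domination implies sum domination -/

lemma abel_le_aux (w d : ℕ → ℝ) : ∀ q : ℕ, (∀ i, i < q+1 → 0 ≤ w i) →
    (∀ i, i + 1 < q+1 → w (i+1) ≤ w i) →
    (∀ K, K ≤ q+1 → (∑ i ∈ Finset.range K, d i) ≤ 0) →
    (∑ i ∈ Finset.range (q+1), w i * d i) ≤ w q * (∑ i ∈ Finset.range (q+1), d i) := by
  intro q
  induction q with
  | zero => intro _ _ _; simp [Finset.sum_range_one]
  | succ q ih =>
      intro hw0 hwa hS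
      have h1 := ih (fun i hi => hw0 i (by omega)) (fun i hi => hwa i (by omega))
        (fun K hK => hS K (by omega))
      have hSq : (∑ i ∈ Finset.range (q+1), d i) ≤ 0 := hS (q+1) (by omega)
      have hwle : w (q+1) ≤ w q := hwa q (by omega)
      have hw1 : 0 ≤ w (q+1) := hw0 (q+1) (by omega)
      rw [Finset.sum_range_succ (f := fun i => w i * d i), Finset.sum_range_succ (f := d)]
      nlinarith [mul_nonneg (sub_nonneg.mpr hwle) (neg_nonneg.mpr hSq)]

lemma abel_le (w d : ℕ → ℝ) (q : ℕ) (hw0 : ∀ i, i < q → 0 ≤ w i)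
    (hwa : ∀ i, i + 1 < q → w (i+1) ≤ w i)
    (hS : ∀ K, K ≤ q → (∑ i ∈ Finset.range K, d i) ≤ 0) :
    (∑ i ∈ Finset.range q, w i * d i) ≤ 0 := by
  cases q with
  | zero => simp
  | succ q =>
      have h := abel_le_aux w d q hw0 hwa hS
      have h2 : w q * (∑ i ∈ Finset.range (q+1), d i) ≤ 0 :=
        mul_nonpos_of_nonneg_of_nonpos (hw0 q (by omega)) (hS (q+1) le_rfl)
      linarith

lemma sum_le_of_prodTop (NN : ℕ) (x y : ℕ → ℝ)
    (hx0 : ∀ i, 0 ≤ x i) (hy0 : ∀ i, 0 ≤ y i)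
    (hxa : ∀ i, x (i+1) ≤ x i)
    (hprod : ∀ K, K ≤ NN → (∏ i ∈ Finset.range K, x i) ≤ ∏ i ∈ Finset.range K, y i) :
    (∑ i ∈ Finset.range NN, x i) ≤ ∑ i ∈ Finset.range NN, y i := by
  have hxmono : Antitone x := antitone_nat_of_succ_le hxa
  set P : ℕ → Prop := fun K => 0 < ∏ i ∈ Finset.range K, x i with hP
  have hP0 : P 0 := by simp [hP]
  set q := Nat.findGreatest P NN with hq
  have hqN : q ≤ NN := Nat.findGreatest_le NN
  have hPq : P q := Nat.findGreatest_spec (Nat.zero_le NN) hP0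
  have hxpos : ∀ i, i < q → 0 < x i := by
    intro i hi
    rcases lt_or_eq_of_le (hx0 i) with h | h
    · exact h
    · exfalso
      have : (∏ j ∈ Finset.range q, x j) = 0 :=
        Finset.prod_eq_zero (Finset.mem_range.mpr hi) h.symm
      have hPq' : (0:ℝ) < ∏ j ∈ Finset.range q, x j := hPq
      rw [this] at hPq'
      exact lt_irrefl 0 hPq'
  have hxzero : ∀ i, q ≤ i → i < NN → x i = 0 := by
    intro i hiq hiNN
    have hqNN : q < NN := lt_of_le_of_lt hiq hiNN
    have hxq : x q = 0 := by
      by_contra hne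
      have hxqpos : 0 < x q := lt_of_le_of_ne (hx0 q) (Ne.symm hne)
      have hPq1 : P (q+1) := by
        have h2 : (0:ℝ) < (∏ j ∈ Finset.range q, x j) * x q := mul_pos hPq hxqpos
        rw [hP]
        simpa [Finset.prod_range_succ] using h2
      exact Nat.findGreatest_is_greatest (Nat.lt_succ_self q) (by omega) hPq1
    exact le_antisymm (by rw [← hxq]; exact hxmono hiq) (hx0 i)
  have hyposq : ∀ K, K ≤ q → 0 < ∏ i ∈ Finset.range K, y i := by
    intro K hK
    have hxK : 0 < ∏ i ∈ Finset.range K, x i :=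
      Finset.prod_pos fun i hi => hxpos i (lt_of_lt_of_le (Finset.mem_range.mp hi) hK)
    exact lt_of_lt_of_le hxK (hprod K (le_trans hK hqN))
  have hypos : ∀ i, i < q → 0 < y i := by
    intro i hi
    by_contra hle
    push_neg at hle
    have h0 : y i = 0 := le_antisymm hle (hy0 i)
    have h1 := hyposq (i+1) (by omega)
    rw [Finset.prod_range_succ, h0, mul_zero] at h1
    exact lt_irrefl 0 h1
  have hper : ∀ i, i < q → x i - y i ≤ x i * (Real.log (x i) - Real.log (y i)) := by
    intro i hi
    have hxp := hxpos i hi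
    have hyp := hypos i hi
    have hlog := Real.log_le_sub_one_of_pos (show 0 < y i / x i from div_pos hyp hxp)
    rw [Real.log_div (ne_of_gt hyp) (ne_of_gt hxp)] at hlog
    have hmul := mul_le_mul_of_nonneg_left hlog (le_of_lt hxp)
    have hyx : x i * (y i / x i) = y i := by field_simp
    nlinarith [hmul, hyx]
  have hsplit_x : (∑ i ∈ Finset.range NN, x i) = ∑ i ∈ Finset.range q, x i := by
    rw [Finset.range_eq_Ico, ← Finset.sum_Ico_consecutive _ (Nat.zero_le q) hqN]
    have hz : (∑ i ∈ Finset.Ico q NN, x i) = 0 :=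
      Finset.sum_eq_zero fun i hi =>
        hxzero i (Finset.mem_Ico.mp hi).1 (Finset.mem_Ico.mp hi).2
    rw [hz, add_zero, ← Finset.range_eq_Ico]
  have hsum_y : (∑ i ∈ Finset.range q, y i) ≤ ∑ i ∈ Finset.range NN, y i :=
    Finset.sum_le_sum_of_subset_of_nonneg (Finset.range_subset_range.mpr hqN)
      fun i _ _ => hy0 i
  have hmain : (∑ i ∈ Finset.range q, x i) ≤ ∑ i ∈ Finset.range q, y i := by
    have hSle : ∀ K, K ≤ q →
        (∑ i ∈ Finset.range K, (Real.log (x i) - Real.log (y i))) ≤ 0 := by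
      intro K hK
      rw [Finset.sum_sub_distrib]
      have hx_ne : ∀ i ∈ Finset.range K, x i ≠ 0 :=
        fun i hi => ne_of_gt (hxpos i (lt_of_lt_of_le (Finset.mem_range.mp hi) hK))
      have hy_ne : ∀ i ∈ Finset.range K, y i ≠ 0 :=
        fun i hi => ne_of_gt (hypos i (lt_of_lt_of_le (Finset.mem_range.mp hi) hK))
      rw [← Real.log_prod hx_ne, ← Real.log_prod hy_ne]
      have hxK : 0 < ∏ i ∈ Finset.range K, x i :=
        Finset.prod_pos fun i hi => hxpos i (lt_of_lt_of_le (Finset.mem_range.mp hi) hK)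
      have := Real.log_le_log hxK (hprod K (le_trans hK hqN))
      linarith
    have habel := abel_le x (fun i => Real.log (x i) - Real.log (y i)) q
      (fun i _ => hx0 i) (fun i _ => hxa i) hSle
    have hsum := Finset.sum_le_sum fun i hi => hper i (Finset.mem_range.mp hi)
    rw [Finset.sum_sub_distrib] at hsum
    linarith
  linarith


/-! ### Final assembly -/

section Final
variable {n : ℕ}

lemma le_orderEmb_val {K : ℕ} (φ : Fin K ↪o Fin n) :
    ∀ (j : ℕ) (h : j < K), j ≤ (φ ⟨j, h⟩ : ℕ) := by
  intro j
  induction j with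
  | zero => intro h; exact Nat.zero_le _
  | succ j ih =>
      intro h
      have hj : j < K := by omega
      have h1 := ih hj
      have h2 : φ ⟨j, hj⟩ < φ ⟨j+1, h⟩ := φ.strictMono (by simp [Fin.mk_lt_mk])
      have h3 : (φ ⟨j, hj⟩ : ℕ) < (φ ⟨j+1, h⟩ : ℕ) := h2
      omega

lemma subset_prod_le (μ : Fin n → ℝ) (hμ0 : ∀ i, 0 ≤ μ i) (σ : Equiv.Perm (Fin n))
    (hanti : ∀ i j : Fin n, i ≤ j → μ (σ j) ≤ μ (σ i))
    {K : ℕ} (hK : K ≤ n) (s : Finset (Fin n)) (hs : s.card = K) :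
    (∏ a ∈ s, μ a) ≤ ∏ i : Fin K, μ (σ (Fin.castLE hK i)) := by
  set s' : Finset (Fin n) := Finset.image (⇑σ.symm) s with hs'
  have hs'card : s'.card = K := by
    rw [hs', Finset.card_image_of_injective _ σ.symm.injective, hs]
  have hsum : (∏ a ∈ s, μ a) = ∏ b ∈ s', μ (σ b) := by
    rw [hs', Finset.prod_image (fun a _ b _ h => σ.symm.injective h)]
    refine Finset.prod_congr rfl fun a _ => ?_
    rw [Equiv.apply_symm_apply]
  rw [hsum, ← prod_orderEmbOfFin ⟨s', hs'card⟩ (fun b => μ (σ b))]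
  apply Finset.prod_le_prod
  · intro i _
    exact hμ0 _
  · intro i _
    apply hanti
    have hle : (i : ℕ) ≤ ((s'.orderEmbOfFin hs'card) i : ℕ) := by
      have h := le_orderEmb_val (s'.orderEmbOfFin hs'card) i.1 i.2
      simpa using h
    exact hle

end Final


theorem core (n : ℕ) (A T : Matrix (Fin n) (Fin n) ℝ)
    (hA : A.PosSemidef) (hT : T.PosSemidef) (r : ℕ) (hr : 1 ≤ r) :
    ((T * A * T) ^ r).trace ≤ (T ^ r * A ^ r * T ^ r).trace := by
  rcases Nat.eq_zero_or_pos n with hn | hn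
  · subst hn
    have h1 : ((T * A * T) ^ r).trace = 0 := by
      rw [Matrix.trace]; exact Finset.sum_of_isEmpty _
    have h2 : ((T ^ r * A ^ r * T ^ r)).trace = 0 := by
      rw [Matrix.trace]; exact Finset.sum_of_isEmpty _
    rw [h1, h2]
  haveI : Nonempty (Fin n) := ⟨⟨0, hn⟩⟩
  have hC : (T * A * T).PosSemidef := by
    have h := hA.mul_mul_conjTranspose_same T
    rwa [hT.isHermitian.eq] at h
  have hD : (T ^ r * A ^ r * T ^ r).PosSemidef := by
    have h := (hA.pow r).mul_mul_conjTranspose_same (T ^ r)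
    rwa [(hT.pow r).isHermitian.eq] at h
  set lC := hC.isHermitian.eigenvalues with hlC
  set lD := hD.isHermitian.eigenvalues with hlD
  obtain ⟨σC, hσC⟩ : ∃ σ : Equiv.Perm (Fin n), ∀ i j : Fin n, i ≤ j → lC (σ j) ≤ lC (σ i) := by
    refine ⟨Tuple.sort (fun i => - lC i), fun i j hij => ?_⟩
    have h := Tuple.monotone_sort (fun i => - lC i) hij
    simpa using h
  obtain ⟨σD, hσD⟩ : ∃ σ : Equiv.Perm (Fin n), ∀ i j : Fin n, i ≤ j → lD (σ j) ≤ lD (σ i) := by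
    refine ⟨Tuple.sort (fun i => - lD i), fun i j hij => ?_⟩
    have h := Tuple.monotone_sort (fun i => - lD i) hij
    simpa using h
  set x : ℕ → ℝ := fun i => if h : i < n then lC (σC ⟨i, h⟩) else 0 with hxdef
  set y : ℕ → ℝ := fun i => if h : i < n then lD (σD ⟨i, h⟩) else 0 with hydef
  have hx0 : ∀ i, 0 ≤ x i := by
    intro i
    rw [hxdef]
    dsimp only
    split
    · exact hC.eigenvalues_nonneg _
    · exact le_rfl
  have hy0 : ∀ i, 0 ≤ y i := by
    intro i
    rw [hydef]
    dsimp only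
    split
    · exact hD.eigenvalues_nonneg _
    · exact le_rfl
  have hxa : ∀ i, x (i+1) ≤ x i := by
    intro i
    rw [hxdef]
    dsimp only
    by_cases h1 : i + 1 < n
    · have h2 : i < n := by omega
      rw [dif_pos h1, dif_pos h2]
      exact hσC ⟨i, h2⟩ ⟨i+1, h1⟩ (by simp [Fin.mk_le_mk])
    · rw [dif_neg h1]
      split
      · exact hC.eigenvalues_nonneg _
      · exact le_rfl
  have hTrC : ((T * A * T) ^ r).trace = ∑ i ∈ Finset.range n, (x i) ^ r := by
    rw [herm_trace_pow hC.isHermitian r]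
    rw [← Equiv.sum_comp σC (fun j => lC j ^ r)]
    rw [← Fin.sum_univ_eq_sum_range (fun i => x i ^ r) n]
    refine Finset.sum_congr rfl fun j _ => ?_
    rw [hxdef]
    dsimp only
    rw [dif_pos j.isLt]
  have hTrD : (T ^ r * A ^ r * T ^ r).trace = ∑ i ∈ Finset.range n, y i := by
    have h := herm_trace_pow hD.isHermitian 1
    rw [pow_one] at h
    rw [h]
    simp only [pow_one]
    rw [← Equiv.sum_comp σD lD]
    rw [← Fin.sum_univ_eq_sum_range y n]
    refine Finset.sum_congr rfl fun j _ => ?_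
    rw [hydef]
    dsimp only
    rw [dif_pos j.isLt]
  rw [hTrC, hTrD]
  apply sum_le_of_prodTop n (fun i => x i ^ r) y
    (fun i => pow_nonneg (hx0 i) r) hy0
    (fun i => pow_le_pow_left₀ (hx0 (i+1)) (hxa i) r)
  intro K hK
  haveI hne : Nonempty (SubIdx n K) := subIdx_nonempty hK
  set S0 : Finset (Fin n) := Finset.image (fun i : Fin K => σC (Fin.castLE hK i)) Finset.univ
    with hS0
  have hS0card : S0.card = K := by
    rw [hS0, Finset.card_image_of_injective _
      (fun a b hab => Fin.castLE_injective hK (σC.injective hab)),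
      Finset.card_univ, Fintype.card_fin]
  have hxprod : (∏ i ∈ Finset.range K, x i) = ∏ a ∈ S0, lC a := by
    rw [hS0, Finset.prod_image (fun a _ b _ h =>
      Fin.castLE_injective hK (σC.injective h))]
    rw [← Fin.prod_univ_eq_prod_range x K]
    refine Finset.prod_congr rfl fun i _ => ?_
    rw [hxdef]
    dsimp only
    rw [dif_pos (lt_of_lt_of_le i.isLt hK)]
    rfl
  have hprodpow : (∏ i ∈ Finset.range K, x i ^ r) = (∏ i ∈ Finset.range K, x i) ^ r :=
    Finset.prod_pow _ _ _
  have h1 : (∏ a ∈ S0, lC a) ≤ ‖cpd K (T * A * T)‖ := by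
    rw [cpd_norm_eq hC K]
    exact Finset.le_sup' (fun s : SubIdx n K => ∏ a ∈ s.1, lC a)
      (Finset.mem_univ (⟨S0, hS0card⟩ : SubIdx n K))
  have h2 : ‖cpd K (T * A * T)‖ ^ r ≤ ‖cpd K (T ^ r * A ^ r * T ^ r)‖ := by
    have hfc : cpd K (T * A * T) = cpd K T * cpd K A * cpd K T := by
      rw [cpd_mul, cpd_mul]
    have hfd : cpd K (T ^ r * A ^ r * T ^ r)
        = (cpd K T) ^ r * (cpd K A) ^ r * (cpd K T) ^ r := by
      simp only [cpd_mul, cpd_pow]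
    rw [hfc, hfd]
    exact norm_conj_pow_le (cpd_posSemidef hA K) (cpd_posSemidef hT K) r
  have h3 : ‖cpd K (T ^ r * A ^ r * T ^ r)‖ ≤ ∏ i ∈ Finset.range K, y i := by
    rw [cpd_norm_eq hD K]
    apply Finset.sup'_le
    intro s _
    have hsub := subset_prod_le lD (fun i => hD.eigenvalues_nonneg i) σD hσD hK s.1 s.2
    refine le_trans hsub ?_
    rw [← Fin.prod_univ_eq_prod_range y K]
    apply le_of_eq
    refine Finset.prod_congr rfl fun i _ => ?_
    rw [hydef]
    dsimp only
    rw [dif_pos (lt_of_lt_of_le i.isLt hK)]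
    rfl
  calc (∏ i ∈ Finset.range K, x i ^ r) = (∏ i ∈ Finset.range K, x i) ^ r := hprodpow
  _ = (∏ a ∈ S0, lC a) ^ r := by rw [hxprod]
  _ ≤ ‖cpd K (T * A * T)‖ ^ r :=
      pow_le_pow_left₀ (Finset.prod_nonneg fun a _ => hC.eigenvalues_nonneg a) h1 r
  _ ≤ ‖cpd K (T ^ r * A ^ r * T ^ r)‖ := h2
  _ ≤ ∏ i ∈ Finset.range K, y i := h3

end LiebThirring

/-- Lieb–Thirring inequality (trace form): for positive semidefinite real `n×n`
matrices `A`, `B` with `sqrtB` the PSD square root of `B`, and an integer `r ≥ 1`,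
`Tr((B^(1/2) A B^(1/2))^r) ≤ Tr(B^(r/2) A^r B^(r/2))`, where `B^(r/2) = sqrtB^r`. -/
theorem lieb_thirring (n : ℕ) (A B sqrtB : Matrix (Fin n) (Fin n) ℝ)
    (hA : A.PosSemidef) (hB : B.PosSemidef)
    (hsqrt_psd : sqrtB.PosSemidef) (hsqrt_sq : sqrtB ^ 2 = B)
    (r : ℕ) (hr : 1 ≤ r) :
    ((sqrtB * A * sqrtB) ^ r).trace ≤ (sqrtB ^ r * A ^ r * sqrtB ^ r).trace :=
  LiebThirring.core n A sqrtB hA hsqrt_psd r hr
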